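/- Let A be a monotone non-increasing allocation rule with A_t ∈ (0,1] for all t, and let P*_K(A) = c_K and P*_t(A) = c_t + Σ_{j=t+1}^K (A_j/A_t)(c_j − c_{j−1}) for t < K. Define the virtual costs φ(c_1) = c_1 and, for j ≥ 2, φ(c_j) = c_j + (c_j − c_{j−1})·(Σ_{s=1}^{j−1} π_s)/π_j. Then the expected payment satisfies Σ_{t=1}^K π_t · P*_t(A) · A_t = Σ_{t=1}^K π_t · φ(c_t) · A_t. -/

import Mathlib

/-- The expected payment under the canonical payments `P*` equals the
expected virtual cost weighted by the allocation rule.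
Costs are indexed by `{1, …, K}`. -/
theorem expected_payment_eq_expected_virtual_cost
    (K : ℕ) (hK : 1 ≤ K) (c A Pstar phi π : ℕ → ℝ)
    (hc1 : 0 < c 1)
    (hcmono : ∀ j ∈ Finset.Icc 1 (K - 1), c j < c (j + 1))
    (hπpos : ∀ t ∈ Finset.Icc 1 K, 0 < π t)
    (hπsum : ∑ t ∈ Finset.Icc 1 K, π t = 1)
    (hApos : ∀ t ∈ Finset.Icc 1 K, 0 < A t)
    (hAle1 : ∀ t ∈ Finset.Icc 1 K, A t ≤ 1)
    (hAmono : ∀ j ∈ Finset.Icc 1 (K - 1), A (j + 1) ≤ A j)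
    (hPstar : ∀ t ∈ Finset.Icc 1 K,
      Pstar t = c t + ∑ j ∈ Finset.Icc (t + 1) K, (A j / A t) * (c j - c (j - 1)))
    (hphi1 : phi 1 = c 1)
    (hphij : ∀ j ∈ Finset.Icc 2 K,
      phi j = c j + (c j - c (j - 1)) * (∑ s ∈ Finset.Icc 1 (j - 1), π s) / π j) :
    ∑ t ∈ Finset.Icc 1 K, π t * Pstar t * A t
      = ∑ t ∈ Finset.Icc 1 K, π t * phi t * A t := by
  have hA0 : ∀ t ∈ Finset.Icc 1 K, A t ≠ 0 := fun t ht => (hApos t ht).ne'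
  have hL : ∀ t ∈ Finset.Icc 1 K,
      π t * Pstar t * A t
        = π t * c t * A t
          + ∑ j ∈ Finset.Icc (t+1) K, π t * (A j * (c j - c (j-1))) := by
    intro t ht
    rw [hPstar t ht, mul_add, add_mul, Finset.mul_sum, Finset.sum_mul]
    congr 1
    refine Finset.sum_congr rfl fun j hj => ?_
    field_simp [hA0 t ht]
  have hR : ∀ t ∈ Finset.Icc 1 K,
      π t * phi t * A t
        = π t * c t * A t
          + (∑ s ∈ Finset.Icc 1 (t-1), π s) * (A t * (c t - c (t-1))) := by
    intro t ht
    rcases eq_or_lt_of_le (Finset.mem_Icc.mp ht).1 with h1 | h2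
    · rw [← h1, hphi1]
      simp
    · have ht2 : t ∈ Finset.Icc 2 K := Finset.mem_Icc.mpr ⟨h2, (Finset.mem_Icc.mp ht).2⟩
      have hπ0 : π t ≠ 0 := (hπpos t ht).ne'
      rw [hphij t ht2]
      field_simp
  rw [Finset.sum_congr rfl hL, Finset.sum_congr rfl hR,
    Finset.sum_add_distrib, Finset.sum_add_distrib]
  congr 1
  simp only [← Finset.Ico_add_one_right_eq_Icc]
  rw [Finset.sum_Ico_Ico_comm']
  refine Finset.sum_congr rfl fun j hj => ?_
  have hj1 : 1 ≤ j := (Finset.mem_Ico.mp hj).1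
  rw [← Finset.sum_mul]
  congr 2
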